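/- Let 𝓕 be the SparXnet function class with parameters d, K, χ, L, Γ and K ≤ d. Let ℓ : ℝ × ℝ → ℝ be a loss function with 0 ≤ ℓ ≤ B that is ℒ-Lipschitz in its first argument. Let (x¹,y¹),…,(x^N,y^N) be N i.i.d. samples from a distribution on ℝ^d × ℝ such that ‖x‖_∞ ≤ χ almost surely. Let f̂ ∈ 𝓕 be a minimizer of the empirical risk (1/N)∑_{i=1}^N ℓ(f(x^i), y^i) over 𝓕 and let f* ∈ 𝓕 be a minimizer of the population risk E ℓ(f(x), y) over 𝓕 (both assumed to exist). Then for every δ ∈ (0,1), with probability at least 1 − δ over the draw of the training set, (1/N)∑_{i=1}^N ℓ(f̂(x^i), y^i) − E ℓ(f*(x), y) ≤ (24ℒ/√N)·(15χLΓ√K + 3)·√(log₂(12dN²(χLΓ + 1)))·log(N) + 6B√(log(2/δ)/(2N)). -/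

import Mathlib

open MeasureTheory

/-- Chord bound for `exp` on `[lo, hi]`. -/
lemma exp_chord {lo hi y : ℝ} (hlt : lo < hi) (h1 : lo ≤ y) (h2 : y ≤ hi) :
    Real.exp y ≤ (hi * Real.exp lo - lo * Real.exp hi) / (hi - lo) +
      (Real.exp hi - Real.exp lo) / (hi - lo) * y := by
  have hD : (0:ℝ) < hi - lo := by linarith
  have hkey := convexOn_exp.2 (Set.mem_univ lo) (Set.mem_univ hi)
    (show (0:ℝ) ≤ (hi - y)/(hi - lo) by apply div_nonneg <;> linarith)
    (show (0:ℝ) ≤ (y - lo)/(hi - lo) by apply div_nonneg <;> linarith)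
    (show (hi - y)/(hi - lo) + (y - lo)/(hi - lo) = 1 by field_simp; ring)
  have hy : ((hi - y)/(hi - lo)) • lo + ((y - lo)/(hi - lo)) • hi = y := by
    simp only [smul_eq_mul]; field_simp; ring
  rw [hy] at hkey
  simp only [smul_eq_mul] at hkey
  calc Real.exp y ≤ (hi - y)/(hi - lo) * Real.exp lo + (y - lo)/(hi - lo) * Real.exp hi := hkey
    _ = (hi * Real.exp lo - lo * Real.exp hi) / (hi - lo) +
      (Real.exp hi - Real.exp lo) / (hi - lo) * y := by field_simp; ring

/-- A crude Hoeffding-type bound on the moment generating function of a random variable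
taking values in `[0, B]`. -/
lemma mgf_bound {Ω : Type*} [MeasureSpace Ω] [IsProbabilityMeasure (volume : Measure Ω)]
    {g : Ω → ℝ} (hg : Measurable g) {B s : ℝ} (hB : 0 < B) (hs : 0 < s)
    (h0 : ∀ x, 0 ≤ g x) (h1 : ∀ x, g x ≤ B) :
    ∫ x, Real.exp (s * g x) ≤ Real.exp (s * (∫ x, g x) + s ^ 2 * B ^ 2 / 2) := by
  have hgint : Integrable g := by
    refine ⟨hg.aestronglyMeasurable, HasFiniteIntegral.of_bounded (C := B) ?_⟩
    exact ae_of_all _ fun x => by rw [Real.norm_eq_abs, abs_of_nonneg (h0 x)]; exact h1 x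
  set c := ∫ x, g x with hc
  have hc0 : 0 ≤ c := integral_nonneg h0
  have hcB : c ≤ B := by
    calc c ≤ ∫ _ : Ω, B := integral_mono hgint (integrable_const B) h1
    _ = B := by simp
  set lo := s * (c - B) with hlo
  set hi := s * (c + B) with hhi
  have hlt : lo < hi := by
    apply mul_lt_mul_of_pos_left (by linarith) hs
  have hD : (0:ℝ) < hi - lo := by linarith
  set a := (hi * Real.exp lo - lo * Real.exp hi) / (hi - lo) with ha
  set b := (Real.exp hi - Real.exp lo) / (hi - lo) with hb
  have hpt : ∀ x, Real.exp (s * g x) ≤ a + (b * s) * g x := by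
    intro x
    have h1' : lo ≤ s * g x := by
      apply mul_le_mul_of_nonneg_left _ hs.le
      linarith [h0 x]
    have h2' : s * g x ≤ hi := by
      apply mul_le_mul_of_nonneg_left _ hs.le
      linarith [h1 x]
    have := exp_chord hlt h1' h2'
    calc Real.exp (s * g x) ≤ a + b * (s * g x) := this
      _ = a + (b * s) * g x := by ring
  have hexp_int : Integrable (fun x => Real.exp (s * g x)) := by
    refine ⟨((hg.const_mul s).exp).aestronglyMeasurable,
      HasFiniteIntegral.of_bounded (C := Real.exp (s * B)) ?_⟩
    refine ae_of_all _ fun x => ?_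
    rw [Real.norm_eq_abs, abs_of_pos (Real.exp_pos _)]
    exact Real.exp_le_exp.2 (mul_le_mul_of_nonneg_left (h1 x) hs.le)
  have haff_int : Integrable (fun x => a + (b * s) * g x) :=
    (integrable_const a).add (hgint.const_mul _)
  have hstep : ∫ x, Real.exp (s * g x) ≤ a + (b * s) * c := by
    calc ∫ x, Real.exp (s * g x) ≤ ∫ x, (a + (b * s) * g x) :=
          integral_mono hexp_int haff_int hpt
      _ = a + (b * s) * c := by
          rw [integral_add (integrable_const a) (hgint.const_mul _), integral_const,
            integral_const_mul]
          simp [hc]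
  have hsc : s * c = (lo + hi) / 2 := by rw [hlo, hhi]; ring
  have hmid : a + (b * s) * c = (Real.exp lo + Real.exp hi) / 2 := by
    rw [mul_assoc, hsc, ha, hb]
    field_simp
    ring
  have hcosh : (Real.exp lo + Real.exp hi) / 2 = Real.exp (s * c) * Real.cosh (s * B) := by
    rw [Real.cosh_eq, hlo, hhi, show s * (c - B) = s * c + -(s * B) by ring,
      show s * (c + B) = s * c + s * B by ring, Real.exp_add, Real.exp_add]
    ring
  calc ∫ x, Real.exp (s * g x) ≤ a + (b * s) * c := hstep
    _ = Real.exp (s * c) * Real.cosh (s * B) := by rw [hmid, hcosh]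
    _ ≤ Real.exp (s * c) * Real.exp ((s * B) ^ 2 / 2) :=
        mul_le_mul_of_nonneg_left (Real.cosh_le_exp_half_sq _) (Real.exp_nonneg _)
    _ = Real.exp (s * c + s ^ 2 * B ^ 2 / 2) := by
        rw [← Real.exp_add]; ring_nf

/-- A Hoeffding-type tail bound for sums of i.i.d. random variables in `[0, B]`. -/
lemma hoeffding_tail {Ω : Type*} [MeasureSpace Ω] [IsProbabilityMeasure (volume : Measure Ω)]
    {g : Ω → ℝ} (hg : Measurable g) {B : ℝ} (hB : 0 < B)
    (h0 : ∀ x, 0 ≤ g x) (h1 : ∀ x, g x ≤ B) (N : ℕ) {t : ℝ} (ht : 0 < t) :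
    (volume : Measure (Fin N → Ω)) {S | (N : ℝ) * ((∫ x, g x) + t) ≤ ∑ i, g (S i)} ≤
      ENNReal.ofReal (Real.exp (-((N : ℝ) * t ^ 2 / (2 * B ^ 2)))) := by
  haveI : IsProbabilityMeasure (volume : Measure (Fin N → Ω)) := by
    rw [show (volume : Measure (Fin N → Ω)) = Measure.pi fun _ => volume from volume_pi]
    infer_instance
  set s := t / B ^ 2 with hsdef
  have hs : 0 < s := by positivity
  set c := ∫ x, g x with hc
  set X : (Fin N → Ω) → ℝ := fun S => ∑ i, g (S i) with hX
  have hXmeas : Measurable X := Finset.measurable_sum _ fun i _ => hg.comp (measurable_pi_apply i)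
  have h_int : Integrable (fun S => Real.exp (s * X S)) := by
    refine ⟨((hXmeas.const_mul s).exp).aestronglyMeasurable,
      HasFiniteIntegral.of_bounded (C := Real.exp (s * (N * B))) ?_⟩
    refine ae_of_all _ fun S => ?_
    rw [Real.norm_eq_abs, abs_of_pos (Real.exp_pos _)]
    refine Real.exp_le_exp.2 (mul_le_mul_of_nonneg_left ?_ hs.le)
    calc X S ≤ ∑ _i : Fin N, B := Finset.sum_le_sum fun i _ => h1 _
      _ = N * B := by simp [mul_comm]
  have hchernoff := ProbabilityTheory.measure_ge_le_exp_mul_mgf (X := X)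
    (μ := volume) (t := s) ((N : ℝ) * (c + t)) hs.le h_int
  have hmgf : ProbabilityTheory.mgf X volume s = (∫ x, Real.exp (s * g x)) ^ N := by
    rw [ProbabilityTheory.mgf]
    have : ∀ S : Fin N → Ω, Real.exp (s * X S) = ∏ i, Real.exp (s * g (S i)) := by
      intro S; rw [hX]; simp only [Finset.mul_sum]; rw [Real.exp_sum]
    simp only [this]
    rw [MeasureTheory.integral_fintype_prod_volume_eq_pow (ι := Fin N) (fun x => Real.exp (s * g x)),
      Fintype.card_fin]
  have hbound := mgf_bound hg hB hs h0 h1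
  have hmgf_le : ProbabilityTheory.mgf X volume s ≤
      (Real.exp (s * c + s ^ 2 * B ^ 2 / 2)) ^ N := by
    rw [hmgf]
    exact pow_le_pow_left₀ (integral_nonneg fun x => (Real.exp_nonneg _)) hbound N
  have hfinal : (volume {S : Fin N → Ω | (N : ℝ) * (c + t) ≤ X S}).toReal ≤
      Real.exp (-((N : ℝ) * t ^ 2 / (2 * B ^ 2))) := by
    calc (volume {S : Fin N → Ω | (N : ℝ) * (c + t) ≤ X S}).toReal
        ≤ Real.exp (-s * ((N : ℝ) * (c + t))) * ProbabilityTheory.mgf X volume s := hchernoff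
      _ ≤ Real.exp (-s * ((N : ℝ) * (c + t))) * (Real.exp (s * c + s ^ 2 * B ^ 2 / 2)) ^ N :=
          mul_le_mul_of_nonneg_left hmgf_le (Real.exp_nonneg _)
      _ = Real.exp (-s * ((N : ℝ) * (c + t)) + (N : ℝ) * (s * c + s ^ 2 * B ^ 2 / 2)) := by
          rw [← Real.exp_nat_mul, ← Real.exp_add]
      _ = Real.exp (-((N : ℝ) * t ^ 2 / (2 * B ^ 2))) := by
          congr 1
          rw [hsdef]
          field_simp
          ring
  rw [ENNReal.le_ofReal_iff_toReal_le (measure_ne_top _ _) (Real.exp_nonneg _)]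
  exact hfinal

/-- The SparXnet function class on `ℝ^d` with `K` pathways: functions of the form
`F(x) = ∑ₖ θₖ fₖ(∑ᵤ Wᵏᵤ xᵤ)` where each `Wᵏ` has positive entries summing to at most 1,
each `fₖ` is `L`-Lipschitz with `|fₖ| ≤ χL` on `[−χ, χ]`, and `∑ₖ |θₖ| ≤ Γ`. -/
def SparXnet (d K : ℕ) (χ L Γ : ℝ) : Set ((Fin d → ℝ) → ℝ) :=
  {F | ∃ (θ : Fin K → ℝ) (W : Fin K → Fin d → ℝ) (f : Fin K → ℝ → ℝ),
    (∀ k u, 0 < W k u) ∧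
    (∀ k, (∑ u, W k u) ≤ 1) ∧
    (∀ k, ∀ s t : ℝ, |f k s - f k t| ≤ L * |s - t|) ∧
    (∀ k, ∀ t : ℝ, |t| ≤ χ → |f k t| ≤ χ * L) ∧
    (∑ k, |θ k|) ≤ Γ ∧
    ∀ x : Fin d → ℝ, F x = ∑ k, θ k * f k (∑ u, W k u * x u)}

/-- main generalization theorem for SparXnet: if `fhat` maps each training set
to an empirical risk minimizer over the SparXnet class and `fstar` is a population risk
minimizer, then with probability at least `1 − δ` over the draw of `N` i.i.d. samples,
the empirical risk of `fhat` exceeds the population risk of `fstar` by at most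
`(24ℒ/√N)(15χLΓ√K + 3)·√(log₂(12dN²(χLΓ + 1)))·log N + 6B√(log(2/δ)/(2N))`. -/
theorem sparxnet_generalization
    (d K N : ℕ) (hKd : K ≤ d) (hN : 0 < N)
    (χ L Γ B 𝓛 : ℝ) (hχ : 0 < χ) (hL : 0 < L) (hΓ : 0 < Γ)
    (ℓ : ℝ → ℝ → ℝ)
    (hℓmeas : Measurable (Function.uncurry ℓ))
    (hℓ0 : ∀ s t : ℝ, 0 ≤ ℓ s t) (hℓB : ∀ s t : ℝ, ℓ s t ≤ B)
    (hℓlip : ∀ s s' t : ℝ, |ℓ s t - ℓ s' t| ≤ 𝓛 * |s - s'|)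
    (μ : Measure ((Fin d → ℝ) × ℝ)) [IsProbabilityMeasure μ]
    (hsupp : ∀ᵐ p ∂μ, ∀ u, |p.1 u| ≤ χ)
    -- `fhat S` is an empirical risk minimizer over the SparXnet class for the sample `S`
    (fhat : (Fin N → (Fin d → ℝ) × ℝ) → ((Fin d → ℝ) → ℝ))
    (hfhat_mem : ∀ S, fhat S ∈ SparXnet d K χ L Γ)
    (hfhat_min : ∀ S, ∀ F ∈ SparXnet d K χ L Γ,
      (1 / N : ℝ) * ∑ i, ℓ (fhat S (S i).1) (S i).2 ≤
        (1 / N : ℝ) * ∑ i, ℓ (F (S i).1) (S i).2)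
    -- `fstar` is a population risk minimizer over the SparXnet class
    (fstar : (Fin d → ℝ) → ℝ)
    (hfstar_mem : fstar ∈ SparXnet d K χ L Γ)
    (hfstar_min : ∀ F ∈ SparXnet d K χ L Γ,
      (∫ p, ℓ (fstar p.1) p.2 ∂μ) ≤ ∫ p, ℓ (F p.1) p.2 ∂μ)
    (δ : ℝ) (hδ : δ ∈ Set.Ioo (0 : ℝ) 1) :
    1 - ENNReal.ofReal δ ≤
      (Measure.pi fun _ : Fin N => μ)
        {S : Fin N → (Fin d → ℝ) × ℝ |
          (1 / N : ℝ) * (∑ i, ℓ (fhat S (S i).1) (S i).2) -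
              (∫ p, ℓ (fstar p.1) p.2 ∂μ) ≤
            24 * 𝓛 / Real.sqrt N * (15 * χ * L * Γ * Real.sqrt K + 3) *
                Real.sqrt (Real.logb 2 (12 * d * N ^ 2 * (χ * L * Γ + 1))) * Real.log N +
              6 * B * Real.sqrt (Real.log (2 / δ) / (2 * N))} := by
  obtain ⟨hδ0, hδ1⟩ := hδ
  -- measurability of fstar
  obtain ⟨θ, W, f, hWpos, hWsum, hflip, hfbd, hθ, heq⟩ := hfstar_mem
  have hfk_meas : ∀ k, Measurable (f k) := by
    intro k
    have : LipschitzWith L.toNNReal (f k) := by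
      refine LipschitzWith.of_dist_le_mul fun s t => ?_
      rw [Real.dist_eq, Real.dist_eq, Real.coe_toNNReal L hL.le]
      exact hflip k s t
    exact this.continuous.measurable
  have hfstar_meas : Measurable fstar := by
    have hrw : fstar = fun x => ∑ k, θ k * f k (∑ u, W k u * x u) := funext heq
    rw [hrw]
    exact Finset.measurable_sum _ fun k _ =>
      ((hfk_meas k).comp (Finset.measurable_sum _ fun u _ =>
        (by fun_prop : Measurable fun x : Fin d → ℝ => W k u * x u))).const_mul (θ k)
  set g : ((Fin d → ℝ) × ℝ) → ℝ := fun p => ℓ (fstar p.1) p.2 with hgdef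
  have hgmeas : Measurable g :=
    hℓmeas.comp ((hfstar_meas.comp measurable_fst).prodMk measurable_snd)
  have h0 : ∀ p, 0 ≤ g p := fun p => hℓ0 _ _
  have h1 : ∀ p, g p ≤ B := fun p => hℓB _ _
  have hB0 : (0:ℝ) ≤ B := le_trans (hℓ0 0 0) (hℓB 0 0)
  have hNpos : (0:ℝ) < (N:ℝ) := by exact_mod_cast hN
  letI : MeasureSpace ((Fin d → ℝ) × ℝ) := ⟨μ⟩
  haveI : IsProbabilityMeasure (volume : Measure ((Fin d → ℝ) × ℝ)) :=
    inferInstanceAs (IsProbabilityMeasure μ)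
  have hpi : (Measure.pi fun _ : Fin N => μ) =
      (volume : Measure (Fin N → ((Fin d → ℝ) × ℝ))) := volume_pi.symm
  haveI : IsProbabilityMeasure (Measure.pi fun _ : Fin N => μ) := by infer_instance
  set c := ∫ p, ℓ (fstar p.1) p.2 ∂μ with hcdef
  have hcc : (∫ x, g x) = c := rfl
  set t := 6 * B * Real.sqrt (Real.log (2 / δ) / (2 * N)) with htdef
  have hlogpos : 0 < Real.log (2 / δ) := by
    apply Real.log_pos
    rw [lt_div_iff₀ hδ0]; linarith
  have ht0 : 0 ≤ t := by positivity
  -- the good event for the fixed function fstar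
  set A : Set (Fin N → (Fin d → ℝ) × ℝ) := {S | ∑ i, g (S i) ≤ (N:ℝ) * (c + t)} with hAdef
  have hAmeas : MeasurableSet A :=
    measurableSet_le (Finset.measurable_sum _ fun i _ =>
      hgmeas.comp (measurable_pi_apply i)) measurable_const
  -- probability bound on the complement of A
  have hAc : (Measure.pi fun _ : Fin N => μ) Aᶜ ≤ ENNReal.ofReal δ := by
    rcases eq_or_lt_of_le hB0 with hBeq | hBpos
    · -- degenerate case B = 0 : the loss vanishes identically
      have hg0 : ∀ p, g p = 0 := fun p => le_antisymm (by rw [hBeq]; exact h1 p) (h0 p)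
      have hAc_empty : Aᶜ = ∅ := by
        ext S
        simp only [Set.mem_compl_iff, hAdef, Set.mem_setOf_eq, Set.mem_empty_iff_false,
          iff_false, not_not]
        have hc0' : c = 0 := by
          rw [← hcc]; simp only [hg0]; simp
        have ht0' : t = 0 := by rw [htdef, ← hBeq]; ring
        simp [hg0, hc0', ht0']
      rw [hAc_empty]
      simp
    · have htpos : 0 < t := by positivity
      have htail := hoeffding_tail hgmeas hBpos h0 h1 N htpos
      have hsub : Aᶜ ⊆ {S : Fin N → (Fin d → ℝ) × ℝ |
          (N : ℝ) * ((∫ x, g x) + t) ≤ ∑ i, g (S i)} := by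
        intro S hS
        simp only [Set.mem_compl_iff, hAdef, Set.mem_setOf_eq, not_le] at hS
        rw [Set.mem_setOf_eq, hcc]
        exact hS.le
      have hexp_le : Real.exp (-((N : ℝ) * t ^ 2 / (2 * B ^ 2))) ≤ δ := by
        have ht2 : t ^ 2 = 36 * B ^ 2 * (Real.log (2 / δ) / (2 * N)) := by
          rw [htdef, mul_pow, mul_pow, Real.sq_sqrt (by positivity)]
          norm_num
        have hexpo : (N : ℝ) * t ^ 2 / (2 * B ^ 2) = 9 * Real.log (2 / δ) := by
          rw [ht2]
          field_simp
          ring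
        rw [hexpo]
        have h9 : Real.exp (-(9 * Real.log (2 / δ))) = (Real.exp (-Real.log (2 / δ))) ^ (9:ℕ) := by
          rw [← Real.exp_nat_mul]; norm_num
        have hneg : Real.exp (-Real.log (2 / δ)) = δ / 2 := by
          rw [Real.exp_neg, Real.exp_log (by positivity)]
          rw [inv_div]
        rw [h9, hneg]
        calc (δ / 2) ^ (9:ℕ) ≤ (δ / 2) ^ (1:ℕ) := by
              apply pow_le_pow_of_le_one (by linarith) (by linarith) (by norm_num)
          _ = δ / 2 := pow_one _
          _ ≤ δ := by linarith
      calc (Measure.pi fun _ : Fin N => μ) Aᶜ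
          ≤ (Measure.pi fun _ : Fin N => μ)
            {S : Fin N → (Fin d → ℝ) × ℝ | (N : ℝ) * ((∫ x, g x) + t) ≤ ∑ i, g (S i)} :=
            measure_mono hsub
        _ ≤ ENNReal.ofReal (Real.exp (-((N : ℝ) * t ^ 2 / (2 * B ^ 2)))) := by
            rw [hpi]; exact htail
        _ ≤ ENNReal.ofReal δ := ENNReal.ofReal_le_ofReal hexp_le
  -- the first term of the bound is nonnegative
  have h𝓛0 : 0 ≤ 𝓛 := by
    have h := hℓlip 1 0 0
    rw [show |(1:ℝ) - 0| = 1 by norm_num, mul_one] at h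
    linarith [abs_nonneg (ℓ 1 0 - ℓ 0 0)]
  have hlogN : 0 ≤ Real.log N := Real.log_nonneg (by exact_mod_cast hN)
  have hR0 : 0 ≤ 24 * 𝓛 / Real.sqrt N * (15 * χ * L * Γ * Real.sqrt K + 3) *
      Real.sqrt (Real.logb 2 (12 * d * N ^ 2 * (χ * L * Γ + 1))) * Real.log N := by
    apply mul_nonneg _ hlogN
    apply mul_nonneg _ (Real.sqrt_nonneg _)
    apply mul_nonneg (div_nonneg (by linarith) (Real.sqrt_nonneg _)) (by positivity)
  -- A is contained in the target event
  have hAsub : A ⊆ {S : Fin N → (Fin d → ℝ) × ℝ |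
      (1 / N : ℝ) * (∑ i, ℓ (fhat S (S i).1) (S i).2) - c ≤
        24 * 𝓛 / Real.sqrt N * (15 * χ * L * Γ * Real.sqrt K + 3) *
            Real.sqrt (Real.logb 2 (12 * d * N ^ 2 * (χ * L * Γ + 1))) * Real.log N + t} := by
    intro S hS
    simp only [hAdef, Set.mem_setOf_eq] at hS
    rw [Set.mem_setOf_eq]
    have hmin := hfhat_min S fstar ⟨θ, W, f, hWpos, hWsum, hflip, hfbd, hθ, heq⟩
    have hgS : (∑ i, ℓ (fstar (S i).1) (S i).2) = ∑ i, g (S i) := rfl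
    rw [hgS] at hmin
    have hmean : (1 / N : ℝ) * (∑ i, g (S i)) ≤ c + t := by
      have h := mul_le_mul_of_nonneg_left hS (le_of_lt (one_div_pos.2 hNpos))
      calc (1 / N : ℝ) * (∑ i, g (S i)) ≤ (1 / N : ℝ) * ((N:ℝ) * (c + t)) := h
        _ = c + t := by field_simp
    have := le_trans hmin hmean
    linarith
  -- conclude
  calc 1 - ENNReal.ofReal δ
      ≤ 1 - (Measure.pi fun _ : Fin N => μ) Aᶜ := tsub_le_tsub_left hAc 1
    _ = (Measure.pi fun _ : Fin N => μ) A := by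
        rw [prob_compl_eq_one_sub hAmeas]
        exact ENNReal.sub_sub_cancel ENNReal.one_ne_top prob_le_one
    _ ≤ _ := measure_mono hAsub
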